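/- (Aumann) Let G be a finite extensive game with perfect information without relevant ties, with unique subgame perfect equilibrium s*, and consider any knowledge system for G. Then CK R ⊆ I, i.e., common knowledge of rationality implies that the players' joint strategy is the backward induction (subgame perfect equilibrium) strategy s*. -/

import Mathlib

/-- A finite extensive game with perfect information: a finite rooted tree whose
leaves carry an outcome for each player and whose internal nodes carry the player
to move and a nonempty finite family of children. -/
inductive ExtGame (ι : Type) : Type where
  | leaf : (ι → ℝ) → ExtGame ι
  | node : ι → (m : ℕ) → (Fin (m + 1) → ExtGame ι) → ExtGame ι

namespace ExtGame

variable {ι : Type}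

/-- A strategy of player `i`: at every node where it is `i`'s turn, a choice of a child. -/
def Strategy (i : ι) : ExtGame ι → Type
  | .leaf _ => PUnit
  | .node j m children => (i = j → Fin (m + 1)) × ∀ c : Fin (m + 1), Strategy i (children c)

/-- The outcome (payoff vector) when every player follows his strategy. -/
def outcome : (G : ExtGame ι) → (∀ i, G.Strategy i) → ι → ℝ
  | .leaf o, _ => o
  | .node j _ children, σ =>
      outcome (children ((σ j).1 rfl)) (fun i => (σ i).2 ((σ j).1 rfl))

/-- Nodes of the game tree, identified by the path from the root. -/
inductive Node : ExtGame ι → Type where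
  | root (G : ExtGame ι) : Node G
  | child {j : ι} {m : ℕ} {children : Fin (m + 1) → ExtGame ι}
      (c : Fin (m + 1)) : Node (children c) → Node (.node j m children)

/-- The subgame rooted at a node. -/
def subgameAt : {G : ExtGame ι} → Node G → ExtGame ι
  | _, .root G => G
  | _, .child c v => subgameAt v

/-- The joint strategy of the subgame rooted at `v` induced by a joint strategy. -/
def restrictProfile : {G : ExtGame ι} → (∀ i, G.Strategy i) → (v : Node G) →
    ∀ i, (subgameAt v).Strategy i
  | _, σ, .root _ => σ
  | _, σ, .child c v => restrictProfile (fun i => (σ i).2 c) v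

/-- Nash equilibrium of (the strategic form of) an extensive game. -/
def NashEq [DecidableEq ι] (G : ExtGame ι) (σ : ∀ i, G.Strategy i) : Prop :=
  ∀ (i : ι) (t : G.Strategy i), G.outcome σ i ≥ G.outcome (Function.update σ i t) i

/-- Subgame perfect equilibrium: the induced joint strategy is a Nash equilibrium
in the subgame rooted at every node. -/
def SPE [DecidableEq ι] (G : ExtGame ι) (σ : ∀ i, G.Strategy i) : Prop :=
  ∀ v : Node G, (subgameAt v).NashEq (restrictProfile σ v)

/-- At the root (if it is a non-leaf), the player to move chooses a child whose
subgame outcome (under the induced strategies) is maximal for him. -/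
def BestAtRoot : (G : ExtGame ι) → (∀ i, G.Strategy i) → Prop
  | .leaf _, _ => True
  | .node j _ children, σ =>
      ∀ c, outcome (children ((σ j).1 rfl)) (fun i => (σ i).2 ((σ j).1 rfl)) j ≥
        outcome (children c) (fun i => (σ i).2 c) j

/-- The list of payoff vectors at the leaves of the game tree (one entry per leaf). -/
def leavesList : ExtGame ι → List (ι → ℝ)
  | .leaf o => [o]
  | .node _ _ children => (List.ofFn fun c => leavesList (children c)).flatten

/-- The game is without relevant ties: at every non-leaf node `u` with `turn(u) = i`,
the outcome function of player `i` is injective on the leaves of the subtree rooted at `u`. -/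
def NoRelevantTies : ExtGame ι → Prop
  | .leaf _ => True
  | .node j m children =>
      ((ExtGame.node j m children).leavesList.Pairwise fun o o' => o j ≠ o' j) ∧
      ∀ c, NoRelevantTies (children c)

/-- The player to move at a node (`none` if the node is a leaf). -/
def turnAt {G : ExtGame ι} (v : Node G) : Option ι :=
  match subgameAt v with
  | .leaf _ => none
  | .node j _ _ => some j

end ExtGame


/-- The knowledge operator of player `i`, given his information partition (presented as an
equivalence relation `P i` on the set of states `Ω`): `K_i E` is the union of the blocks of
`i`'s partition included in `E`. -/
def Know {n : ℕ} {Ω : Type} (P : Fin n → Setoid Ω) (i : Fin n) (E : Set Ω) : Set Ω :=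
  {ω | ∀ ω', (P i).r ω ω' → ω' ∈ E}

/-- `K E = ⋂ i, K_i E`: everybody knows `E`. -/
def KnowAll {n : ℕ} {Ω : Type} (P : Fin n → Setoid Ω) (E : Set Ω) : Set Ω :=
  ⋂ i : Fin n, Know P i E

/-- `CK E = ⋂ k ≥ 1, K^k E`: common knowledge of `E`. -/
def CK {n : ℕ} {Ω : Type} (P : Fin n → Setoid Ω) (E : Set Ω) : Set Ω :=
  ⋂ k : ℕ, (KnowAll P)^[k + 1] E

/-- The event that player `i` is rational: for every node `v` at which `i` moves and every
strategy `t_i` of player `i`, `i` does not know that `t_i` would yield him a higher outcome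
in the subgame rooted at `v` than the strategy he chooses according to `𝐬`. -/
def Rational {n : ℕ} {Ω : Type} (G : ExtGame (Fin n)) (P : Fin n → Setoid Ω)
    (st : Ω → ∀ i, G.Strategy i) (i : Fin n) : Set Ω :=
  {ω | ∀ v : ExtGame.Node G, ExtGame.turnAt v = some i → ∀ ti : G.Strategy i,
    ω ∉ Know P i {ω' | (ExtGame.subgameAt v).outcome
          (ExtGame.restrictProfile (Function.update (st ω') i ti) v) i >
        (ExtGame.subgameAt v).outcome (ExtGame.restrictProfile (st ω') v) i}}

namespace AumannAux

open ExtGame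

variable {ι : Type}

/-- A default strategy (always exists since every node has at least one child). -/
def defStrat (i : ι) : (G : ExtGame ι) → G.Strategy i
  | .leaf _ => ⟨⟩
  | .node _ _ children => ⟨fun _ => 0, fun c => defStrat i (children c)⟩

lemma outcome_mem : ∀ (G : ExtGame ι) (σ : ∀ i, G.Strategy i), G.outcome σ ∈ G.leavesList
  | .leaf _, _ => List.mem_singleton.mpr rfl
  | .node j m children, σ => by
      show outcome (children ((σ j).1 rfl)) (fun i => (σ i).2 ((σ j).1 rfl))
          ∈ (List.ofFn fun c => leavesList (children c)).flatten
      refine List.mem_flatten.mpr ⟨leavesList (children ((σ j).1 rfl)), ?_, outcome_mem _ _⟩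
      exact List.mem_ofFn.mpr ⟨_, rfl⟩

lemma outcome_node (j : ι) (m : ℕ) (children : Fin (m+1) → ExtGame ι)
    (σ : ∀ i, (ExtGame.node j m children).Strategy i) :
    (ExtGame.node j m children).outcome σ =
      (children ((σ j).1 rfl)).outcome (fun i => (σ i).2 ((σ j).1 rfl)) := rfl

lemma spe_child [DecidableEq ι] {j : ι} {m : ℕ} {children : Fin (m+1) → ExtGame ι}
    {σ : ∀ i, (ExtGame.node j m children).Strategy i}
    (h : SPE _ σ) (c : Fin (m+1)) : SPE (children c) (fun i => (σ i).2 c) :=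
  fun v => h (.child c v)

lemma noties_node {j : ι} {m : ℕ} {children : Fin (m+1) → ExtGame ι}
    (h : ExtGame.NoRelevantTies (.node j m children)) {c c' : Fin (m+1)} (hcc : c ≠ c')
    (σ : ∀ i, (children c).Strategy i) (σ' : ∀ i, (children c').Strategy i) :
    (children c).outcome σ j ≠ (children c').outcome σ' j := by
  have hp : ((List.ofFn fun c => leavesList (children c)).flatten).Pairwise
      (fun o o' => o j ≠ o' j) := h.1
  rw [List.pairwise_flatten] at hp
  have hpf := List.pairwise_ofFn.mp hp.2
  have h1 := outcome_mem (children c) σ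
  have h2 := outcome_mem (children c') σ'
  rcases lt_or_gt_of_ne hcc with hlt | hlt
  · exact hpf hlt _ h1 _ h2
  · exact (hpf hlt _ h2 _ h1).symm

end AumannAux

namespace AumannAux

lemma aumann_key {n : ℕ} : ∀ (G : ExtGame (Fin n)), G.NoRelevantTies →
    ∀ (sstar : ∀ i, G.Strategy i), G.SPE sstar →
    ∀ (Ω : Type) (P : Fin n → Setoid Ω) (st : Ω → ∀ i, G.Strategy i),
    (∀ (i : Fin n) (ω ω' : Ω), (P i).r ω ω' → st ω i = st ω' i) →
    ∀ (C : Set Ω), (∀ (i : Fin n) (ω ω' : Ω), ω ∈ C → (P i).r ω ω' → ω' ∈ C) →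
    (∀ ω ∈ C, ∀ i, ω ∈ Rational G P st i) →
    ∀ ω ∈ C, st ω = sstar := by
  intro G
  induction G with
  | leaf o =>
      intro _ sstar _ Ω P st _ C _ _ ω _
      funext i
      exact Subsingleton.elim (α := PUnit) _ _
  | node j m children IH =>
      intro hties sstar hspe Ω P st hown C hC hR ω hω
      -- Step 1: in every child subgame, strategies agree with sstar on C.
      have hchild : ∀ ω' ∈ C, ∀ (c : Fin (m+1)) (i : Fin n),
          (st ω' i).2 c = (sstar i).2 c := by
        intro ω' hω' c i
        have := IH c (hties.2 c) (fun i => (sstar i).2 c) (spe_child hspe c)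
          Ω P (fun ω i => (st ω i).2 c)
          (fun i ω₁ ω₂ h => congrArg (fun s => s.2 c) (hown i ω₁ ω₂ h))
          C hC ?_ ω' hω'
        · exact congrFun this i
        -- rationality transfers to child knowledge system
        intro ω₁ hω₁ i v hv ti' hK
        -- extend ti' to a full strategy
        refine hR ω₁ hω₁ i (.child c v) hv
          ⟨fun _ => 0, fun c' => if h : c = c' then h ▸ ti' else defStrat i (children c')⟩ ?_
        intro ω₂ hrel
        have h2 := hK ω₂ hrel
        have hcomm : (fun k => ((Function.update (st ω₂) i
            (⟨fun _ => 0, fun c' => if h : c = c' then h ▸ ti' else defStrat i (children c')⟩ :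
              (ExtGame.node j m children).Strategy i)) k).2 c)
            = Function.update (fun k => (st ω₂ k).2 c) i ti' := by
          funext k
          rcases eq_or_ne k i with rfl | hk
          · erw [Function.update_self, Function.update_self]
            exact dif_pos rfl
          · erw [Function.update_of_ne hk, Function.update_of_ne hk]
        show (ExtGame.subgameAt v).outcome
            (ExtGame.restrictProfile (fun k => ((Function.update (st ω₂) i _) k).2 c) v) i >
          (ExtGame.subgameAt v).outcome
            (ExtGame.restrictProfile (fun k => (st ω₂ k).2 c) v) i
        rw [hcomm]
        exact h2
      -- outcome computations
      have hout0 : ∀ (σ : ∀ i, (ExtGame.node j m children).Strategy i),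
          (∀ (c : Fin (m+1)) (i : Fin n), (σ i).2 c = (sstar i).2 c) →
          (ExtGame.node j m children).outcome σ j
            = (children ((σ j).1 rfl)).outcome (fun i => (sstar i).2 ((σ j).1 rfl)) j := by
        intro σ hσ
        rw [outcome_node]
        exact congrFun (congrArg _ (funext fun i => hσ _ i)) j
      have houtc : ∀ (σ : ∀ i, (ExtGame.node j m children).Strategy i),
          (∀ (c : Fin (m+1)) (i : Fin n), (σ i).2 c = (sstar i).2 c) → ∀ c : Fin (m+1),
          (ExtGame.node j m children).outcome
              (Function.update σ j ⟨fun _ => c, (sstar j).2⟩) j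
            = (children c).outcome (fun i => (sstar i).2 c) j := by
        intro σ hσ c
        erw [outcome_node, Function.update_self]
        show (children c).outcome
            (fun i => ((Function.update σ j
              (⟨fun _ => c, (sstar j).2⟩ : (ExtGame.node j m children).Strategy j)) i).2 c) j = _
        refine congrFun (congrArg _ (funext fun i => ?_)) j
        rcases eq_or_ne i j with rfl | h
        · erw [Function.update_self]
        · erw [Function.update_of_ne h]; exact hσ c i
      -- SPE values at the root
      have hu : ∀ c : Fin (m+1),
          (children ((sstar j).1 rfl)).outcome (fun i => (sstar i).2 ((sstar j).1 rfl)) j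
            ≥ (children c).outcome (fun i => (sstar i).2 c) j := by
        intro c
        have h := hspe (.root _) j ⟨fun _ => c, (sstar j).2⟩
        rw [← houtc sstar (fun _ _ => rfl) c, ← hout0 sstar (fun _ _ => rfl)]
        exact h
      -- Step 2: the choice at the root agrees with sstar.
      have hceq : (st ω j).1 rfl = (sstar j).1 rfl := by
        by_contra hne
        have hneq := noties_node hties hne
          (fun i => (sstar i).2 ((st ω j).1 rfl)) (fun i => (sstar i).2 ((sstar j).1 rfl))
        have hgt : (children ((sstar j).1 rfl)).outcome
              (fun i => (sstar i).2 ((sstar j).1 rfl)) j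
            > (children ((st ω j).1 rfl)).outcome
              (fun i => (sstar i).2 ((st ω j).1 rfl)) j :=
          lt_of_le_of_ne (hu _) hneq
        refine hR ω hω j (.root _) rfl ⟨fun _ => (sstar j).1 rfl, (sstar j).2⟩ ?_
        intro ω₂ hrel
        have hst : st ω₂ j = st ω j := (hown j ω ω₂ hrel).symm
        have hC2 := hC j ω ω₂ hω hrel
        have hch2 := hchild ω₂ hC2
        show (ExtGame.node j m children).outcome
            (Function.update (st ω₂) j ⟨fun _ => (sstar j).1 rfl, (sstar j).2⟩) j
          > (ExtGame.node j m children).outcome (st ω₂) j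
        rw [houtc (st ω₂) hch2 ((sstar j).1 rfl), hout0 (st ω₂) hch2, hst]
        exact hgt
      -- Assemble
      funext i
      have h2 : (st ω i).2 = (sstar i).2 := funext fun c => hchild ω hω c i
      have h1 : (st ω i).1 = (sstar i).1 := by
        funext h
        subst h
        exact hceq
      exact Prod.ext h1 h2

end AumannAux

/-- (Aumann) Let `G` be a finite extensive game with perfect information and without relevant
ties, with unique subgame perfect equilibrium `s*`, and consider any knowledge system for `G`
(states `Ω`, information partitions `P i`, strategy function `st`, each player knowing his own
strategy). Then `CK R ⊆ I`: common knowledge of rationality implies that the players' joint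
strategy is the backward induction strategy `s*`. -/
theorem aumann_ckr {n : ℕ} (G : ExtGame (Fin n)) (hties : G.NoRelevantTies)
    (sstar : ∀ i, G.Strategy i) (hspe : G.SPE sstar)
    (huniq : ∀ t : ∀ i, G.Strategy i, G.SPE t → t = sstar)
    (Ω : Type) (hΩ : Nonempty Ω) (P : Fin n → Setoid Ω)
    (st : Ω → ∀ i, G.Strategy i)
    (hown : ∀ (i : Fin n) (ω ω' : Ω), (P i).r ω ω' → st ω i = st ω' i) :
    CK P (⋂ i : Fin n, Rational G P st i) ⊆ {ω | st ω = sstar} := by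
  intro ω hω
  set C := CK P (⋂ i : Fin n, Rational G P st i) with hCdef
  have hclosed : ∀ (i : Fin n) (ω₁ ω₂ : Ω), ω₁ ∈ C → (P i).r ω₁ ω₂ → ω₂ ∈ C := by
    intro i ω₁ ω₂ h1 hrel
    refine Set.mem_iInter.mpr fun k => ?_
    have h2 : ω₁ ∈ (KnowAll P)^[k + 2] (⋂ i : Fin n, Rational G P st i) :=
      Set.mem_iInter.mp h1 (k + 1)
    rw [Function.iterate_succ_apply'] at h2
    exact Set.mem_iInter.mp h2 i ω₂ hrel
  have hsub : ∀ ω₁ ∈ C, ∀ i, ω₁ ∈ Rational G P st i := by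
    intro ω₁ h1 i
    have h2 : ω₁ ∈ (KnowAll P)^[1] (⋂ i : Fin n, Rational G P st i) :=
      Set.mem_iInter.mp h1 0
    rw [Function.iterate_one] at h2
    exact Set.mem_iInter.mp (Set.mem_iInter.mp h2 i ω₁ ((P i).refl ω₁)) i
  exact AumannAux.aumann_key G hties sstar hspe Ω P st hown C hclosed hsub ω hω
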